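/- Let μ be an edge probability measure on a complete graph K and m ≥ 2 an integer. Suppose μ̄(x) ≥ s/m for every x in the support of μ̄, where s ≥ 0. Then β(μ; P_{m+1}) ≤ ((1 − s/m)/(m−1))^{m−1} ≤ e^{1−s}/m^{m−1}. -/

import Mathlib

open Finset

/-- Sum over ordered injective tuples of the `μ`-weight of the corresponding
cycle on `m` vertices; each unlabeled copy of `C_m` (`m ≥ 3`) is counted `2m`
times, so `β(μ; C_m) = cycleSum m μ / (2m)`. -/
noncomputable def cycleSum (m : ℕ) {V : Type*} [Fintype V] [DecidableEq V]
    (μ : Sym2 V → ℝ) : ℝ :=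
  ∑ f ∈ Finset.univ.filter (fun f : Fin m → V => Function.Injective f),
    ∏ i : Fin m, μ s(f i, f (finRotate m i))

/-- Sum over ordered injective tuples of the `μ`-weight of the corresponding
path on `m + 1` vertices; each unlabeled copy of `P_{m+1}` is counted twice, so
`β(μ; P_{m+1}) = pathSum m μ / 2`. -/
noncomputable def pathSum (m : ℕ) {V : Type*} [Fintype V] [DecidableEq V]
    (μ : Sym2 V → ℝ) : ℝ :=
  ∑ f ∈ Finset.univ.filter (fun f : Fin (m + 1) → V => Function.Injective f),
    ∏ i : Fin m, μ s(f i.castSucc, f i.succ)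

section Aux
variable {V : Type*} [Fintype V] [DecidableEq V] (μ : Sym2 V → ℝ)

lemma amgm (k : ℕ) {A T : ℝ} (hA : 0 ≤ A) (hAT : A ≤ T) :
    A * ((T - A) / (k : ℝ)) ^ k ≤ (T / ((k : ℝ) + 1)) ^ (k + 1) := by
  rcases Nat.eq_zero_or_pos k with hk | hk
  · subst hk; simpa using hAT
  · have hkR : (0:ℝ) < k := by exact_mod_cast hk
    have hT : 0 ≤ T := le_trans hA hAT
    set b : ℝ := (T - A) / (k : ℝ) with hb
    have hbnn : 0 ≤ b := div_nonneg (by linarith) hkR.le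
    have hw1 : (0:ℝ) ≤ 1 / ((k:ℝ)+1) := by positivity
    have hw2 : (0:ℝ) ≤ (k:ℝ) / ((k:ℝ)+1) := by positivity
    have hwsum : 1 / ((k:ℝ)+1) + (k:ℝ) / ((k:ℝ)+1) = 1 := by field_simp; ring
    have key := Real.geom_mean_le_arith_mean2_weighted hw1 hw2 hA hbnn hwsum
    -- key : A ^ (1/(k+1)) * b ^ (k/(k+1)) ≤ 1/(k+1) * A + k/(k+1) * b
    have hrhs : 1 / ((k:ℝ)+1) * A + (k:ℝ) / ((k:ℝ)+1) * b = T / ((k:ℝ)+1) := by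
      rw [hb]; field_simp; ring
    rw [hrhs] at key
    have hlhs_nn : 0 ≤ A ^ (1 / ((k:ℝ)+1)) * b ^ ((k:ℝ) / ((k:ℝ)+1)) := by positivity
    have := pow_le_pow_left₀ hlhs_nn key (k+1)
    calc A * b ^ k = (A ^ (1 / ((k:ℝ)+1)) * b ^ ((k:ℝ) / ((k:ℝ)+1))) ^ (k+1) := by
          rw [mul_pow, ← Real.rpow_natCast (A ^ (1 / ((k:ℝ)+1))) (k+1),
            ← Real.rpow_natCast (b ^ ((k:ℝ) / ((k:ℝ)+1))) (k+1),
            ← Real.rpow_mul hA, ← Real.rpow_mul hbnn]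
          push_cast
          rw [one_div_mul_cancel (by positivity), div_mul_cancel₀ _ (by positivity : ((k:ℝ)+1) ≠ 0)]
          rw [Real.rpow_one, Real.rpow_natCast]
      _ ≤ (T / ((k:ℝ)+1)) ^ (k+1) := this

lemma expbound (m : ℕ) (hm : 2 ≤ m) (s : ℝ) (hsm : s ≤ m) :
    ((1 - s / m) / ((m : ℝ) - 1)) ^ (m - 1) ≤ Real.exp (1 - s) / (m : ℝ) ^ (m - 1) := by
  have hm1 : (1:ℝ) ≤ (m:ℝ) := by exact_mod_cast le_trans (by norm_num) hm
  have hm1' : (0:ℝ) < (m:ℝ) - 1 := by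
    have : (2:ℝ) ≤ (m:ℝ) := by exact_mod_cast hm
    linarith
  have hmpos : (0:ℝ) < (m:ℝ) := by linarith
  have hcast : ((m - 1 : ℕ) : ℝ) = (m:ℝ) - 1 := by
    rw [Nat.cast_sub (by omega)]; norm_num
  have hbase : (1 - s / m) / ((m : ℝ) - 1) = ((m:ℝ) - s) / ((m:ℝ) - 1) / m := by
    have h0 : (1 : ℝ) - s/m = ((m:ℝ) - s)/m := by field_simp
    rw [h0, div_div, div_div, mul_comm]
  have hb0 : 0 ≤ ((m:ℝ) - s) / ((m:ℝ) - 1) := by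
    apply div_nonneg (by linarith) hm1'.le
  have hstep : ((m:ℝ) - s) / ((m:ℝ) - 1) ≤ Real.exp ((1 - s) / ((m:ℝ) - 1)) := by
    have h1 : ((m:ℝ) - s) / ((m:ℝ) - 1) = (1 - s) / ((m:ℝ) - 1) + 1 := by
      field_simp; ring
    rw [h1]; exact Real.add_one_le_exp _
  have hpow : (((m:ℝ) - s) / ((m:ℝ) - 1)) ^ (m - 1)
      ≤ Real.exp ((1 - s) / ((m:ℝ) - 1)) ^ (m - 1) :=
    pow_le_pow_left₀ hb0 hstep _
  have hexp : Real.exp ((1 - s) / ((m:ℝ) - 1)) ^ (m - 1) = Real.exp (1 - s) := by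
    rw [← Real.exp_nat_mul, hcast]
    congr 1
    field_simp
  rw [hbase, div_pow, div_le_div_iff₀ (by positivity) (by positivity)]
  calc (((m:ℝ) - s) / ((m:ℝ) - 1)) ^ (m-1) * (m:ℝ)^(m-1)
      ≤ Real.exp (1 - s) * (m:ℝ)^(m-1) := by
        rw [← hexp]; exact mul_le_mul_of_nonneg_right hpow (by positivity)
    _ = Real.exp (1-s) * (m:ℝ)^(m-1) := rfl

variable {V : Type*} [Fintype V] [DecidableEq V] (μ : Sym2 V → ℝ)

open Classical in
noncomputable def pathW (k : ℕ) (X : Finset V) (y : V) : ℝ :=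
  ∑ f ∈ univ.filter (fun f : Fin (k+1) → V =>
      Function.Injective f ∧ f 0 = y ∧ ∀ i, f i ∉ X),
    ∏ i : Fin k, μ s(f i.castSucc, f i.succ)

noncomputable def eW (X : Finset V) : ℝ := ∑ u ∈ Xᶜ, ∑ v ∈ Xᶜ.erase u, μ s(u,v)

lemma pathW_zero (X : Finset V) (y : V) (hy : y ∉ X) : pathW μ 0 X y = 1 := by
  classical
  rw [pathW]
  rw [Finset.sum_congr rfl (fun f _ => rfl)]
  have : (univ.filter (fun f : Fin 1 → V =>
      Function.Injective f ∧ f 0 = y ∧ ∀ i, f i ∉ X)) = {fun _ => y} := by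
    ext f
    simp only [mem_filter, mem_univ, true_and, mem_singleton]
    constructor
    · rintro ⟨-, h0, -⟩
      funext i
      rw [Subsingleton.elim i 0, h0]
    · rintro rfl
      refine ⟨fun a b _ => Subsingleton.elim a b, rfl, fun i => hy⟩
  rw [this]
  simp

lemma pathW_succ (k : ℕ) (X : Finset V) (y : V) (hy : y ∉ X) :
    pathW μ (k+1) X y = ∑ u ∈ Xᶜ.erase y, μ s(y,u) * pathW μ k (insert y X) u := by
  classical
  have hRHS : ∑ u ∈ Xᶜ.erase y, μ s(y,u) * pathW μ k (insert y X) u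
      = ∑ g : Fin (k+1) → V, (if Function.Injective g ∧ (∀ i, g i ∉ insert y X)
          then μ s(y, g 0) * ∏ i : Fin k, μ s(g i.castSucc, g i.succ) else 0) := by
    have h1 : ∀ u, μ s(y,u) * pathW μ k (insert y X) u
        = ∑ g : Fin (k+1) → V, (if Function.Injective g ∧ g 0 = u ∧ (∀ i, g i ∉ insert y X)
            then μ s(y, u) * ∏ i : Fin k, μ s(g i.castSucc, g i.succ) else 0) := by
      intro u
      rw [pathW, Finset.mul_sum, ← Finset.sum_filter]
    rw [Finset.sum_congr rfl (fun u _ => h1 u), Finset.sum_comm]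
    apply Finset.sum_congr rfl
    intro g _
    rw [Finset.sum_eq_single (g 0)]
    · by_cases h : Function.Injective g ∧ (∀ i, g i ∉ insert y X)
      · rw [if_pos ⟨h.1, rfl, h.2⟩, if_pos h]
      · rw [if_neg (by tauto), if_neg h]
    · intro b _ hb
      rw [if_neg (by tauto)]
    · intro hg0
      rw [if_neg]
      rintro ⟨-, -, havoid⟩
      apply hg0
      have := havoid 0
      simp only [mem_insert, not_or] at this
      simp only [mem_erase, mem_compl]
      exact ⟨this.1, this.2⟩
  rw [hRHS, pathW, Finset.sum_filter]
  rw [← Equiv.sum_comp (Fin.consEquiv (fun _ : Fin (k+2) => V))]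
  rw [Fintype.sum_prod_type]
  simp only [show ⇑(Fin.consEquiv fun _ : Fin (k+2) => V) = fun p => Fin.cons p.1 p.2 from rfl]
  rw [Finset.sum_eq_single y]
  · apply Finset.sum_congr rfl
    intro g _
    have hP : (Function.Injective (Fin.cons y g : Fin (k+2) → V) ∧
          (Fin.cons y g : Fin (k+2) → V) 0 = y ∧
          ∀ i : Fin (k+2), (Fin.cons y g : Fin (k+2) → V) i ∉ X)
        ↔ (Function.Injective g ∧ ∀ i, g i ∉ insert y X) := by
      constructor
      · rintro ⟨hc, -, hav⟩
        rw [Fin.cons_injective_iff] at hc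
        refine ⟨hc.2, fun i => ?_⟩
        simp only [mem_insert, not_or]
        have h1 : (Fin.cons y g : Fin (k+2) → V) i.succ ∉ X := hav i.succ
        rw [Fin.cons_succ] at h1
        exact ⟨fun h => hc.1 ⟨i, h⟩, h1⟩
      · rintro ⟨hinj, hav⟩
        have h1 : ∀ i, g i ≠ y ∧ g i ∉ X := by
          intro i; have := hav i; simp only [mem_insert, not_or] at this; exact this
        refine ⟨Fin.cons_injective_iff.2 ⟨?_, hinj⟩, Fin.cons_zero _ _, ?_⟩
        · rintro ⟨i, hi⟩; exact (h1 i).1 hi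
        · intro i
          refine Fin.cases ?_ ?_ i
          · rw [Fin.cons_zero]; exact hy
          · intro j; rw [Fin.cons_succ]; exact (h1 j).2
    have hprod : (∏ i : Fin (k+1), μ s((Fin.cons y g : Fin (k+2) → V) i.castSucc,
          (Fin.cons y g : Fin (k+2) → V) i.succ))
        = μ s(y, g 0) * ∏ i : Fin k, μ s(g i.castSucc, g i.succ) := by
      rw [Fin.prod_univ_succ]
      have h0 : μ s((Fin.cons y g : Fin (k+2) → V) (0 : Fin (k+1)).castSucc,
          (Fin.cons y g : Fin (k+2) → V) (0 : Fin (k+1)).succ) = μ s(y, g 0) := by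
        rw [Fin.castSucc_zero, Fin.cons_zero, Fin.succ_zero_eq_one,
          show (1 : Fin (k+2)) = Fin.succ 0 from Fin.succ_zero_eq_one.symm, Fin.cons_succ]
      rw [h0]
      have hrest : ∀ i : Fin k, μ s((Fin.cons y g : Fin (k+2) → V) (i.succ).castSucc,
          (Fin.cons y g : Fin (k+2) → V) (i.succ).succ) = μ s(g i.castSucc, g i.succ) := fun i => by
        rw [← Fin.succ_castSucc, Fin.cons_succ, Fin.cons_succ]
      rw [Finset.prod_congr rfl (fun i _ => hrest i)]
    rw [if_congr hP hprod rfl]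
  · intro b _ hb
    apply Finset.sum_eq_zero
    intro g _
    rw [if_neg]
    rintro ⟨-, h0, -⟩
    exact hb (by rw [← h0, Fin.cons_zero])
  · simp

lemma eW_nonneg (hnn : ∀ e, 0 ≤ μ e) (X : Finset V) : 0 ≤ eW μ X :=
  Finset.sum_nonneg fun _ _ => Finset.sum_nonneg fun _ _ => hnn _

lemma eW_insert (X : Finset V) (y : V) (hy : y ∉ X) :
    eW μ X = eW μ (insert y X) + 2 * ∑ u ∈ Xᶜ.erase y, μ s(y,u) := by
  classical
  have hyc : y ∈ Xᶜ := Finset.mem_compl.2 hy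
  have hinner : ∀ u ∈ Xᶜ.erase y, (∑ v ∈ Xᶜ.erase u, μ s(u,v))
      = μ s(u,y) + ∑ v ∈ (Xᶜ.erase y).erase u, μ s(u,v) := by
    intro u hu
    have huy : u ≠ y := (Finset.mem_erase.1 hu).1
    have hyin : y ∈ Xᶜ.erase u := Finset.mem_erase.2 ⟨huy.symm, hyc⟩
    rw [← Finset.add_sum_erase _ _ hyin, Finset.erase_right_comm]
  have hswap : ∀ u ∈ Xᶜ.erase y, μ s(u,y) + ∑ v ∈ (Xᶜ.erase y).erase u, μ s(u,v)
      = μ s(y,u) + ∑ v ∈ (Xᶜ.erase y).erase u, μ s(u,v) := by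
    intro u _
    rw [Sym2.eq_swap]
  calc eW μ X = (∑ v ∈ Xᶜ.erase y, μ s(y,v)) + ∑ u ∈ Xᶜ.erase y, ∑ v ∈ Xᶜ.erase u, μ s(u,v) := by
        rw [eW, ← Finset.add_sum_erase _ _ hyc]
    _ = (∑ v ∈ Xᶜ.erase y, μ s(y,v)) + ∑ u ∈ Xᶜ.erase y,
          (μ s(y,u) + ∑ v ∈ (Xᶜ.erase y).erase u, μ s(u,v)) := by
        rw [Finset.sum_congr rfl fun u hu => (hinner u hu).trans (hswap u hu)]
    _ = eW μ (insert y X) + 2 * ∑ u ∈ Xᶜ.erase y, μ s(y,u) := by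
        rw [Finset.sum_add_distrib, eW, Finset.compl_insert]
        ring

lemma eW_empty (hdiag : ∀ e : Sym2 V, e.IsDiag → μ e = 0) :
    eW μ ∅ = 2 * ∑ e : Sym2 V, μ e := by
  classical
  have h1 : eW μ ∅ = ∑ p : V × V, μ (Function.uncurry Sym2.mk p) := by
    rw [eW, Fintype.sum_prod_type]
    simp only [Finset.compl_empty]
    refine Finset.sum_congr rfl fun u _ => ?_
    exact Finset.sum_erase _ (hdiag _ (by simp))
  rw [h1, ← Finset.sum_fiberwise Finset.univ (Function.uncurry Sym2.mk) (fun p => μ (Function.uncurry Sym2.mk p))]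
  rw [Finset.mul_sum]
  refine Finset.sum_congr rfl fun e _ => ?_
  induction e using Sym2.ind with
  | _ a b =>
    by_cases hab : a = b
    · subst hab
      rw [hdiag s(a,a) (by simp), mul_zero]
      refine Finset.sum_eq_zero fun p hp => ?_
      rw [(Finset.mem_filter.1 hp).2, hdiag s(a,a) (by simp)]
    · have hfib : Finset.univ.filter (fun p : V × V => Function.uncurry Sym2.mk p = s(a,b))
          = {(a,b), (b,a)} := by
        ext ⟨c, d⟩
        simp only [Finset.mem_filter, Finset.mem_univ, true_and, Finset.mem_insert,
          Finset.mem_singleton, Function.uncurry_apply_pair, Sym2.eq_iff, Prod.mk.injEq]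
        try tauto
      rw [hfib, Finset.sum_insert (by simp [Prod.ext_iff]; tauto), Finset.sum_singleton,
        show (Function.uncurry Sym2.mk (b, a)) = s(a,b) from Sym2.eq_swap,
        Function.uncurry_apply_pair]
      ring

lemma pathW_le (hnn : ∀ e, 0 ≤ μ e) :
    ∀ (k : ℕ) (X : Finset V) (y : V), y ∉ X → ∀ T : ℝ, eW μ X ≤ 2 * T →
    pathW μ k X y ≤ (T / (k : ℝ)) ^ k := by
  intro k
  induction k with
  | zero => intro X y hy T hT; rw [pathW_zero μ X y hy]; simp
  | succ k ih =>
    intro X y hy T hT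
    set A := ∑ u ∈ Xᶜ.erase y, μ s(y,u) with hA
    have hAnn : 0 ≤ A := Finset.sum_nonneg fun _ _ => hnn _
    have hsplit := eW_insert μ X y hy
    have hAT : A ≤ T := by
      have h0 := eW_nonneg μ hnn (insert y X)
      linarith
    have hT' : eW μ (insert y X) ≤ 2 * (T - A) := by linarith
    rw [pathW_succ μ k X y hy]
    have hstep : ∀ u ∈ Xᶜ.erase y, μ s(y,u) * pathW μ k (insert y X) u
        ≤ μ s(y,u) * ((T - A) / (k:ℝ)) ^ k := by
      intro u hu
      have hu' : u ∉ insert y X := by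
        rcases Finset.mem_erase.1 hu with ⟨h1, h2⟩
        simp only [Finset.mem_insert, not_or]
        exact ⟨h1, Finset.mem_compl.1 h2⟩
      exact mul_le_mul_of_nonneg_left (ih (insert y X) u hu' (T - A) hT') (hnn _)
    calc ∑ u ∈ Xᶜ.erase y, μ s(y,u) * pathW μ k (insert y X) u
        ≤ ∑ u ∈ Xᶜ.erase y, μ s(y,u) * ((T-A)/(k:ℝ))^k := Finset.sum_le_sum hstep
      _ = A * ((T-A)/(k:ℝ))^k := by rw [← Finset.sum_mul]
      _ ≤ (T / ((k:ℝ)+1))^(k+1) := amgm k hAnn hAT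
      _ = (T / ((k+1 : ℕ):ℝ))^(k+1) := by push_cast; ring

lemma pathSum_eq (m : ℕ) : pathSum m μ = ∑ x : V, pathW μ m ∅ x := by
  classical
  have h : ∀ x : V, pathW μ m ∅ x
      = ∑ f ∈ (univ.filter (fun f : Fin (m+1) → V => Function.Injective f)).filter
          (fun f => f 0 = x), ∏ i : Fin m, μ s(f i.castSucc, f i.succ) := by
    intro x
    rw [pathW, Finset.filter_filter]
    apply Finset.sum_congr _ (fun _ _ => rfl)
    apply Finset.filter_congr
    intro f _
    simp [and_comm]
  rw [Finset.sum_congr rfl (fun x _ => h x), pathSum]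
  exact (Finset.sum_fiberwise (univ.filter (fun f : Fin (m+1) → V => Function.Injective f))
    (fun f => f 0) (fun f => ∏ i : Fin m, μ s(f i.castSucc, f i.succ))).symm

end Aux

/-- If every vertex in the support of `μ̄` has mass at least `s/m` (with `s ≥ 0`,
`m ≥ 2`), then `β(μ;P_{m+1}) ≤ ((1 − s/m)/(m−1))^(m−1) ≤ e^(1−s)/m^(m−1)`. -/
theorem path_beta_bound_of_min_degree {V : Type*} [Fintype V] [DecidableEq V]
    (m : ℕ) (hm : 2 ≤ m)
    (μ : Sym2 V → ℝ) (hnn : ∀ e, 0 ≤ μ e)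
    (hdiag : ∀ e : Sym2 V, e.IsDiag → μ e = 0)
    (hsum : ∑ e : Sym2 V, μ e = 1)
    (s : ℝ) (hs : 0 ≤ s)
    (hmin : ∀ x : V, (∑ y ∈ Finset.univ.erase x, μ s(x, y)) ≠ 0 →
      s / m ≤ ∑ y ∈ Finset.univ.erase x, μ s(x, y)) :
    pathSum m μ / 2 ≤ ((1 - s / m) / ((m : ℝ) - 1)) ^ (m - 1) ∧
    ((1 - s / m) / ((m : ℝ) - 1)) ^ (m - 1) ≤ Real.exp (1 - s) / (m : ℝ) ^ (m - 1) := by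
  classical
  obtain ⟨k, rfl⟩ : ∃ k, m = k + 2 := ⟨m - 2, by omega⟩
  set d : V → ℝ := fun x => ∑ y ∈ Finset.univ.erase x, μ s(x, y) with hd
  have hcompl : (∅ : Finset V)ᶜ = univ := Finset.compl_empty
  have hdeg : ∀ x, (∑ u ∈ (∅ : Finset V)ᶜ.erase x, μ s(x,u)) = d x := by
    intro x; rw [hcompl]
  have heW : eW μ ∅ = 2 := by rw [eW_empty μ hdiag, hsum]; norm_num
  have hsum_d : ∑ x : V, d x = 2 := by
    rw [← heW, eW, hcompl]
  have hdnn : ∀ x, 0 ≤ d x := fun x => Finset.sum_nonneg fun _ _ => hnn _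
  have hsplit : ∀ x : V, eW μ {x} = 2 - 2 * d x := by
    intro x
    have h1 := eW_insert μ ∅ x (by simp)
    rw [heW, hdeg x] at h1
    simp only [LawfulSingleton.insert_empty_eq] at h1
    linarith
  have hd1 : ∀ x, d x ≤ 1 := by
    intro x
    have h2 := eW_nonneg μ hnn {x}
    rw [hsplit x] at h2
    linarith
  have hsm : s ≤ ((k+2 : ℕ) : ℝ) := by
    have hex : ∃ x, d x ≠ 0 := by
      by_contra h
      push_neg at h
      rw [Finset.sum_eq_zero (fun x _ => h x)] at hsum_d
      norm_num at hsum_d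
    obtain ⟨x, hx⟩ := hex
    have h1 := hmin x hx
    have h2 := hd1 x
    have h3 : (0:ℝ) < ((k+2 : ℕ) : ℝ) := by positivity
    rw [div_le_iff₀ h3] at h1
    nlinarith [hdnn x]
  set B : ℝ := ((1 - s / ((k+2 : ℕ) : ℝ)) / (((k+1 : ℕ)) : ℝ)) ^ (k+1) with hB
  have hvert : ∀ x : V, pathW μ (k+2) ∅ x ≤ d x * B := by
    intro x
    have hx0 : x ∉ (∅ : Finset V) := by simp
    rw [show k + 2 = (k+1) + 1 from rfl, pathW_succ μ (k+1) ∅ x hx0]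
    simp only [LawfulSingleton.insert_empty_eq]
    by_cases hdx : d x = 0
    · have hz : ∀ u ∈ (∅ : Finset V)ᶜ.erase x, μ s(x,u) = 0 := by
        intro u hu
        have h0 : ∑ u ∈ Finset.univ.erase x, μ s(x,u) = 0 := hdx
        exact (Finset.sum_eq_zero_iff_of_nonneg (fun _ _ => hnn _)).1 h0 u
          (by rw [hcompl] at hu; exact hu)
      rw [Finset.sum_eq_zero (fun u hu => by rw [hz u hu, zero_mul]), hdx, zero_mul]
    · have hdx' : s / ((k+2 : ℕ) : ℝ) ≤ d x := hmin x hdx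
      have hTx : eW μ {x} ≤ 2 * (1 - d x) := by rw [hsplit x]; linarith
      have hbb : ∀ u ∈ (∅ : Finset V)ᶜ.erase x,
          μ s(x,u) * pathW μ (k+1) {x} u
          ≤ μ s(x,u) * ((1 - d x) / ((k+1 : ℕ) : ℝ)) ^ (k+1) := by
        intro u hu
        refine mul_le_mul_of_nonneg_left ?_ (hnn _)
        refine pathW_le μ hnn (k+1) {x} u ?_ (1 - d x) hTx
        rw [hcompl] at hu
        simp only [Finset.mem_singleton]
        exact (Finset.mem_erase.1 hu).1
      calc ∑ u ∈ (∅ : Finset V)ᶜ.erase x, μ s(x,u) * pathW μ (k+1) {x} u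
          ≤ ∑ u ∈ (∅ : Finset V)ᶜ.erase x,
              μ s(x,u) * ((1 - d x) / ((k+1 : ℕ) : ℝ)) ^ (k+1) := Finset.sum_le_sum hbb
        _ = d x * ((1 - d x) / ((k+1 : ℕ) : ℝ)) ^ (k+1) := by
            rw [← Finset.sum_mul, hdeg x]
        _ ≤ d x * B := by
            refine mul_le_mul_of_nonneg_left ?_ (hdnn x)
            rw [hB]
            refine pow_le_pow_left₀ (div_nonneg (by linarith [hd1 x]) (by positivity)) ?_ _
            gcongr <;> linarith
  have hps : pathSum (k+2) μ ≤ 2 * B := by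
    rw [pathSum_eq]
    calc ∑ x : V, pathW μ (k+2) ∅ x
        ≤ ∑ x : V, d x * B := Finset.sum_le_sum (fun x _ => hvert x)
      _ = (∑ x : V, d x) * B := by rw [← Finset.sum_mul]
      _ = 2 * B := by rw [hsum_d]
  have hBeq : ((1 - s / ((k+2:ℕ) : ℝ)) / (((k+2:ℕ) : ℝ) - 1)) ^ (k + 2 - 1) = B := by
    have h1 : ((k+2:ℕ):ℝ) - 1 = ((k+1:ℕ):ℝ) := by push_cast; ring
    rw [hB, show k+2-1 = k+1 from rfl, h1]
  constructor
  · rw [hBeq]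
    linarith
  · exact expbound (k+2) hm s hsm
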